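/- For every nonzero f ∈ 𝕃 with deg f = −m (m ≥ 1) such that the Artin map Ψ(f) = {1/f} is defined (f ∉ 𝔽_q(t) suffices), the geometric Farey map satisfies F^{2m}(f, 0) = (Ψ(f), 0); that is, the Artin map is the acceleration of F by time −2·deg(f) at level 0. -/

import Mathlib

/-!
Setting: `q` a prime power is formalized as `q = Fintype.card Fq` for a finite field `Fq`.
The field `K = 𝔽_q((t⁻¹))` of formal Laurent series in `t⁻¹` is realized as
`LaurentSeries Fq = 𝔽_q((X))` with `X = t⁻¹` (so `deg f = -(X-adic order of f)`).
-/

open scoped Classical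
open MeasureTheory Filter
open scoped ENNReal

noncomputable section

variable (Fq : Type) [Field Fq] [Fintype Fq]

/-- `t ∈ K = 𝔽_q((t⁻¹))`, realized as the inverse of the variable `X` of
`LaurentSeries Fq`. -/
def tvar : LaurentSeries Fq := (HahnSeries.single (1 : ℤ) (1 : Fq))⁻¹

/-- The degree `deg f ∈ ℤ ∪ {-∞}` of `f ∈ K`, with `deg 0 = ⊥ = -∞`. -/
def fdeg (f : LaurentSeries Fq) : WithBot ℤ :=
  if f = 0 then ⊥ else ((-f.order : ℤ) : WithBot ℤ)

/-- The absolute value `|f| = q^(deg f)`, with `|0| = 0`. -/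
def fabs (f : LaurentSeries Fq) : ℝ :=
  if f = 0 then 0 else (Fintype.card Fq : ℝ) ^ (-f.order)

/-- Keep only the part of `f` with `X`-exponents `≤ N`, i.e. `t`-exponents `≥ -N`. -/
def cutoff (N : ℤ) (f : LaurentSeries Fq) : LaurentSeries Fq where
  coeff j := if j ≤ N then f.coeff j else 0
  isPWO_support' := f.isPWO_support'.mono (by
    intro j hj
    by_cases hN : j ≤ N
    · simpa [Function.mem_support, hN] using hj
    · simp [Function.mem_support, hN] at hj)

/-- The polynomial part `[f] ∈ 𝔽_q[t]` of `f` (the part with `t`-exponents `≥ 0`). -/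
def polyPart (f : LaurentSeries Fq) : LaurentSeries Fq := cutoff Fq 0 f

/-- The fractional part `{f} = f - [f]`. -/
def fracPart (f : LaurentSeries Fq) : LaurentSeries Fq := f - polyPart Fq f

/-- `𝒪 = {f ∈ K : |f| ≤ 1}`. -/
def setO : Set (LaurentSeries Fq) := {f | fabs Fq f ≤ 1}

/-- `𝕃 = {f ∈ K : |f| < 1}`. -/
def setL : Set (LaurentSeries Fq) := {f | fabs Fq f < 1}

/-- `𝕁₀ = {f ∈ 𝒪 : deg f = 0}`. -/
def setJ0 : Set (LaurentSeries Fq) := {f | fdeg Fq f = ((0 : ℤ) : WithBot ℤ)}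

/-- The embedding `𝔽_q[t] → K`, sending a polynomial `P` to `P(t)`. -/
def polyT (P : Polynomial Fq) : LaurentSeries Fq := Polynomial.aeval (tvar Fq) P

/-- The subfield `𝔽_q(t) ⊆ K` of rational functions (as a subset). -/
def ratSet : Set (LaurentSeries Fq) :=
  {g | ∃ P Q : Polynomial Fq, Q ≠ 0 ∧ g = polyT Fq P / polyT Fq Q}

/-- The Artin map `Ψ(f) = {1/f}`. -/
def artin (f : LaurentSeries Fq) : LaurentSeries Fq := fracPart Fq f⁻¹

/-- The partial quotients `A_n = [1/Ψ^{n-1}(f)]` (`n ≥ 1`). -/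
def pquot (f : LaurentSeries Fq) (n : ℕ) : LaurentSeries Fq :=
  polyPart Fq (((artin Fq)^[n - 1] f)⁻¹)

/-- `convPQ f (k+1) = (P_k, Q_k)`, the principal convergents;
`convPQ f 0 = (P_{-1}, Q_{-1}) = (1, 0)`, `convPQ f 1 = (P_0, Q_0) = (0, 1)`. -/
def convPQ (f : LaurentSeries Fq) : ℕ → LaurentSeries Fq × LaurentSeries Fq
  | 0 => (1, 0)
  | 1 => (0, 1)
  | (n + 2) => (pquot Fq f (n + 1) * (convPQ f (n + 1)).1 + (convPQ f n).1,
                pquot Fq f (n + 1) * (convPQ f (n + 1)).2 + (convPQ f n).2)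

/-- `Pc f (k+1) = P_k`. -/
def Pc (f : LaurentSeries Fq) (n : ℕ) : LaurentSeries Fq := (convPQ Fq f n).1

/-- `Qc f (k+1) = Q_k`. -/
def Qc (f : LaurentSeries Fq) (n : ℕ) : LaurentSeries Fq := (convPQ Fq f n).2

/-- The geometric Farey map `F` on `𝕃 × ℤ`. -/
def fareyGeom (p : LaurentSeries Fq × ℤ) : LaurentSeries Fq × ℤ :=
  if fdeg Fq p.1 < ((-1 : ℤ) : WithBot ℤ) ∨ p.2 < 0 then
    (fracPart Fq (tvar Fq * p.1), p.2 + 1)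
  else
    (fracPart Fq ((tvar Fq * p.1)⁻¹), -(p.2 + 1))

/-- The algebraic Farey map `F_h` associated to `h`. -/
def fareyAlg (h : LaurentSeries Fq) (f : LaurentSeries Fq) : LaurentSeries Fq :=
  if fdeg Fq f = ((0 : ℤ) : WithBot ℤ) then
    (1 - polyPart Fq ((1 - h) * f⁻¹) * f) / f
  else
    f / (1 - polyPart Fq ((1 - h) * f⁻¹) * f)

/-- The matrix `M(f, n)` associated to the geometric Farey map. -/
def geomMat (p : LaurentSeries Fq × ℤ) : Matrix (Fin 2) (Fin 2) (LaurentSeries Fq) :=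
  if p.2 < 0 then
    !![(tvar Fq)⁻¹, (tvar Fq)⁻¹ * polyPart Fq (tvar Fq * p.1); 0, 1]
  else if fdeg Fq p.1 = ((-1 : ℤ) : WithBot ℤ) then
    !![0, 1; tvar Fq, tvar Fq * polyPart Fq ((tvar Fq * p.1)⁻¹)]
  else
    !![1, 0; 0, tvar Fq]

/-- The matrix `M_h(f)` associated to the algebraic Farey map `F_h`. -/
def algMat (h : LaurentSeries Fq) (f : LaurentSeries Fq) :
    Matrix (Fin 2) (Fin 2) (LaurentSeries Fq) :=
  if fdeg Fq f = ((0 : ℤ) : WithBot ℤ) then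
    !![0, 1; 1, polyPart Fq ((1 - h) * f⁻¹)]
  else
    !![1, 0; polyPart Fq ((1 - h) * f⁻¹), 1]

/-- The leading term `LT(f)` of `f`. -/
def leadTerm (f : LaurentSeries Fq) : LaurentSeries Fq :=
  HahnSeries.single f.order (f.coeff f.order)

/-- `G(f) = 1/f - 1/LT(f)`. -/
def Gmap (f : LaurentSeries Fq) : LaurentSeries Fq := f⁻¹ - (leadTerm Fq f)⁻¹

/-- The Farey map `F_𝕁` of Berthé–Nakada–Natsui. -/
def fareyBNN (f : LaurentSeries Fq) : LaurentSeries Fq :=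
  if ((0 : ℤ) : WithBot ℤ) ≤ fdeg Fq (Gmap Fq f) then (Gmap Fq f)⁻¹
  else f⁻¹ - polyPart Fq f⁻¹

/-- The Borel measurable structure on `K`, for the valued-field topology. -/
instance : MeasurableSpace (LaurentSeries Fq) := borel _
instance : BorelSpace (LaurentSeries Fq) := ⟨rfl⟩

/-! ### Auxiliary lemmas for Statement 7 -/

lemma htvar : tvar Fq = HahnSeries.single (-1 : ℤ) (1 : Fq) := by
  unfold tvar
  symm
  apply eq_inv_of_mul_eq_one_left
  rw [HahnSeries.single_mul_single, neg_add_cancel, one_mul, HahnSeries.single_zero_one]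

lemma shift_coeff (k : ℤ) (g : LaurentSeries Fq) (j : ℤ) :
    (HahnSeries.single k (1 : Fq) * g).coeff j = g.coeff (j - k) := by
  have h := HahnSeries.coeff_single_mul_add (r := (1 : Fq)) (x := g) (a := j - k) (b := k)
  rw [one_mul] at h
  have h2 : j - k + k = j := by ring
  rwa [h2] at h

lemma fracPart_coeff (g : LaurentSeries Fq) (j : ℤ) :
    (fracPart Fq g).coeff j = if j ≤ 0 then 0 else g.coeff j := by
  have : (polyPart Fq g).coeff j = if j ≤ 0 then g.coeff j else 0 := rfl
  rw [fracPart, HahnSeries.coeff_sub, this]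
  split_ifs <;> simp

lemma fracPart_eq_self (g : LaurentSeries Fq) (h : ∀ j : ℤ, j ≤ 0 → g.coeff j = 0) :
    fracPart Fq g = g := by
  ext j
  rw [fracPart_coeff]
  split_ifs with hj
  · exact (h j hj).symm
  · rfl

lemma frac_shift (x : LaurentSeries Fq) :
    fracPart Fq (HahnSeries.single (-1 : ℤ) (1 : Fq) * fracPart Fq x)
      = fracPart Fq (HahnSeries.single (-1 : ℤ) (1 : Fq) * x) := by
  ext j
  rw [fracPart_coeff, fracPart_coeff]
  split_ifs with hj
  · rfl
  · rw [shift_coeff, shift_coeff, fracPart_coeff]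
    rw [if_neg (by omega)]

lemma fdeg_of_ne (g : LaurentSeries Fq) (hg : g ≠ 0) :
    fdeg Fq g = ((-g.order : ℤ) : WithBot ℤ) := by
  unfold fdeg
  rw [if_neg hg]

lemma single_mul_ne (k : ℤ) (g : LaurentSeries Fq) (hg : g ≠ 0) :
    HahnSeries.single k (1 : Fq) * g ≠ 0 :=
  mul_ne_zero (HahnSeries.single_ne_zero one_ne_zero) hg

lemma order_single_mul (k : ℤ) (g : LaurentSeries Fq) (hg : g ≠ 0) :
    (HahnSeries.single k (1 : Fq) * g).order = k + g.order := by
  rw [HahnSeries.order_mul (HahnSeries.single_ne_zero one_ne_zero) hg,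
    HahnSeries.order_single one_ne_zero]

lemma phase1 (f : LaurentSeries Fq) (hf0 : f ≠ 0) (m : ℕ) (hord : f.order = (m : ℤ)) :
    ∀ k : ℕ, k < m → (fareyGeom Fq)^[k] (f, 0) =
      (HahnSeries.single (-(k : ℤ)) (1 : Fq) * f, (k : ℤ)) := by
  intro k
  induction k with
  | zero => intro _; simp [HahnSeries.single_zero_one]
  | succ k ih =>
    intro hk
    have hk' : k < m := by omega
    rw [Function.iterate_succ_apply', ih hk']
    have hne : HahnSeries.single (-(k : ℤ)) (1 : Fq) * f ≠ 0 := single_mul_ne Fq _ _ hf0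
    have hordk : (HahnSeries.single (-(k : ℤ)) (1 : Fq) * f).order = -(k : ℤ) + m := by
      rw [order_single_mul Fq _ _ hf0, hord]
    have hcond : fdeg Fq (HahnSeries.single (-(k : ℤ)) (1 : Fq) * f)
        < ((-1 : ℤ) : WithBot ℤ) := by
      rw [fdeg_of_ne Fq _ hne, hordk]
      exact_mod_cast (by omega : -(-(k : ℤ) + m) < -1)
    unfold fareyGeom
    rw [if_pos (Or.inl hcond)]
    have hmul : tvar Fq * (HahnSeries.single (-(k : ℤ)) (1 : Fq) * f)
        = HahnSeries.single (-((k : ℤ) + 1)) (1 : Fq) * f := by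
      rw [htvar, ← mul_assoc, HahnSeries.single_mul_single, one_mul]
      have h3 : (-1 : ℤ) + -(k : ℤ) = -((k : ℤ) + 1) := by ring
      rw [h3]
    rw [hmul]
    have : fracPart Fq (HahnSeries.single (-((k : ℤ) + 1)) (1 : Fq) * f)
        = HahnSeries.single (-((k : ℤ) + 1)) (1 : Fq) * f := by
      apply fracPart_eq_self
      intro j hj
      apply HahnSeries.coeff_eq_zero_of_lt_order
      rw [order_single_mul Fq _ _ hf0, hord]
      omega
    rw [this, Prod.mk.injEq]
    refine ⟨?_, ?_⟩
    · push_cast; ring_nf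
    · push_cast; ring

lemma phase2 (x : LaurentSeries Fq) (m : ℕ) :
    ∀ j : ℕ, j ≤ m → (fareyGeom Fq)^[j] (fracPart Fq x, -(m : ℤ)) =
      (fracPart Fq (HahnSeries.single (-(j : ℤ)) (1 : Fq) * x), -(m : ℤ) + j) := by
  intro j
  induction j with
  | zero => intro _; simp [HahnSeries.single_zero_one]
  | succ j ih =>
    intro hj
    have hj' : j ≤ m := by omega
    rw [Function.iterate_succ_apply', ih hj']
    have hcond : (-(m : ℤ) + j) < 0 := by omega
    unfold fareyGeom
    rw [if_pos (Or.inr hcond)]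
    have hmul : tvar Fq * fracPart Fq (HahnSeries.single (-(j : ℤ)) (1 : Fq) * x)
        = HahnSeries.single (-1 : ℤ) (1 : Fq)
            * fracPart Fq (HahnSeries.single (-(j : ℤ)) (1 : Fq) * x) := by
      rw [htvar]
    rw [hmul, frac_shift, ← mul_assoc, HahnSeries.single_mul_single, one_mul]
    have harg : (-1 : ℤ) + -(j : ℤ) = -((j : ℕ) + 1 : ℕ) := by push_cast; ring
    rw [harg, Prod.mk.injEq]
    refine ⟨rfl, ?_⟩
    show -(m : ℤ) + (j : ℤ) + 1 = -(m : ℤ) + ((j : ℕ) + 1 : ℕ)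
    push_cast; ring

/-- For `f ∈ 𝕃 ∖ 𝔽_q(t)` with `deg f = -m` (`m ≥ 1`), the geometric
Farey map satisfies `F^{2m}(f, 0) = (Ψ(f), 0)`. -/
theorem artin_is_acceleration_of_geometric_farey
    (f : LaurentSeries Fq) (hf0 : f ≠ 0) (hfL : f ∈ setL Fq) (hfirr : f ∉ ratSet Fq)
    (m : ℕ) (hm : 1 ≤ m) (hdeg : fdeg Fq f = ((-(m : ℤ) : ℤ) : WithBot ℤ)) :
    (fareyGeom Fq)^[2 * m] (f, 0) = (artin Fq f, 0) := by
  -- `f.order = m`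
  have hu : f.order = (m : ℤ) := by
    rw [fdeg_of_ne Fq f hf0] at hdeg
    have h := WithBot.coe_inj.mp hdeg
    omega
  have hm1 : (((m - 1 : ℕ)) : ℤ) = (m : ℤ) - 1 := by
    push_cast [Nat.cast_sub hm]; ring
  -- the state after `m - 1` steps
  have h1 := phase1 Fq f hf0 m hu (m - 1) (by omega)
  -- the switching step
  set g : LaurentSeries Fq := HahnSeries.single (-(((m - 1 : ℕ)) : ℤ)) (1 : Fq) * f with hgdef
  have hgne : g ≠ 0 := single_mul_ne Fq _ _ hf0
  have hgord : g.order = 1 := by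
    rw [hgdef, order_single_mul Fq _ _ hf0, hu, hm1]; ring
  have hswitch : fareyGeom Fq (g, (((m - 1 : ℕ)) : ℤ))
      = (fracPart Fq ((HahnSeries.single (-(m : ℤ)) (1 : Fq) * f)⁻¹), -(m : ℤ)) := by
    have hcond : ¬ (fdeg Fq g < ((-1 : ℤ) : WithBot ℤ) ∨ ((((m - 1 : ℕ)) : ℤ) < 0)) := by
      push_neg
      constructor
      · rw [fdeg_of_ne Fq g hgne, hgord]
      · omega
    unfold fareyGeom
    rw [if_neg hcond]
    have hmul : tvar Fq * g = HahnSeries.single (-(m : ℤ)) (1 : Fq) * f := by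
      rw [htvar, hgdef, ← mul_assoc, HahnSeries.single_mul_single, one_mul, hm1]
      have h3 : (-1 : ℤ) + -((m : ℤ) - 1) = -(m : ℤ) := by ring
      rw [h3]
    rw [hmul, Prod.mk.injEq]
    refine ⟨rfl, ?_⟩
    show -((((m - 1 : ℕ)) : ℤ) + 1) = -(m : ℤ)
    omega
  -- the second phase
  have h2 := phase2 Fq ((HahnSeries.single (-(m : ℤ)) (1 : Fq) * f)⁻¹) m m (le_refl m)
  -- assemble
  have hsplit : 2 * m = m + (1 + (m - 1)) := by omega
  rw [hsplit, Function.iterate_add_apply, Function.iterate_add_apply,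
    Function.iterate_one, h1, hswitch, h2]
  have hfin : HahnSeries.single (-(m : ℤ)) (1 : Fq)
      * (HahnSeries.single (-(m : ℤ)) (1 : Fq) * f)⁻¹ = f⁻¹ := by
    rw [mul_inv, ← mul_assoc,
      mul_inv_cancel₀ (HahnSeries.single_ne_zero (one_ne_zero) :
        HahnSeries.single (-(m : ℤ)) (1 : Fq) ≠ 0), one_mul]
  rw [hfin, Prod.mk.injEq]
  exact ⟨rfl, by push_cast; ring⟩

end
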